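/- arXiv:2206.06532 — 3 statements merged into one kernel-verified Lean document; each statement's English description precedes it below -/
import Mathlib

section
/- Let κ > 0, λ > 0 with λ³ > (27/4)κ, and g(Q) = 1 - λ²Q + 2λκQ² - κ²Q³. Then there exist Q₋, Q₊ with 0 < Q₋ < λ/(3κ) < Q₊ < λ/κ such that g(Q₋) = 0 and g(Q₊) = 0. -/
theorem stmt_2 (κ l : ℝ) (hκ : 0 < κ) (hl : 0 < l) (h : 27/4 * κ < l^3)
    (g : ℝ → ℝ) (hg : ∀ Q, g Q = 1 - l^2 * Q + 2 * l * κ * Q^2 - κ^2 * Q^3) :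
    ∃ Qm Qp : ℝ, 0 < Qm ∧ Qm < l / (3 * κ) ∧ l / (3 * κ) < Qp ∧ Qp < l / κ ∧
      g Qm = 0 ∧ g Qp = 0 := by
  have hgfun : g = fun Q => 1 - l^2 * Q + 2 * l * κ * Q^2 - κ^2 * Q^3 := funext hg
  have hcont : Continuous g := by rw [hgfun]; continuity
  have h3κ : (0:ℝ) < 3 * κ := by linarith
  have hmid : (0:ℝ) < l / (3 * κ) := div_pos hl h3κ
  have hml : l / (3 * κ) < l / κ := by
    apply div_lt_div_of_pos_left hl hκ; linarith
  have hg0 : g 0 = 1 := by rw [hg]; ring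
  have hgmid : g (l / (3 * κ)) < 0 := by
    rw [hg]
    have : 1 - l ^ 2 * (l / (3 * κ)) + 2 * l * κ * (l / (3 * κ)) ^ 2 - κ ^ 2 * (l / (3 * κ)) ^ 3
        = 1 - 4 * l^3 / (27 * κ) := by
      field_simp; ring
    rw [this]
    rw [sub_neg, lt_div_iff₀ (by linarith)]
    linarith
  have hgend : g (l / κ) = 1 := by
    rw [hg]; field_simp; ring
  have h1 : (0:ℝ) ∈ Set.Ioo (g (l / (3 * κ))) (g 0) := ⟨hgmid, by rw [hg0]; norm_num⟩
  obtain ⟨Qm, hQm, hQm0⟩ := intermediate_value_Ioo' (le_of_lt hmid) hcont.continuousOn h1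
  have h2 : (0:ℝ) ∈ Set.Ioo (g (l / (3 * κ))) (g (l / κ)) := ⟨hgmid, by rw [hgend]; norm_num⟩
  obtain ⟨Qp, hQp, hQp0⟩ := intermediate_value_Ioo (le_of_lt hml) hcont.continuousOn h2
  exact ⟨Qm, Qp, hQm.1, hQm.2, hQp.1, hQp.2, hQm0, hQp0⟩
end

section
/- With the quadratic pencil 𝔏(σ) = -σ² + 2ΩσJ⋆ + L (L ≥ 0 self-adjoint, J⋆ bounded self-adjoint), if σ ∈ ϱ(𝔏) then ‖𝔏(σ)⁻¹‖ ≥ 1/(d(2(|σ|+|Ω|)+d)) where d = dist(σ, σ(𝔏)) is the distance from σ to the spectrum of the pencil, provided σ(𝔏) is nonempty. -/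
theorem stmt_10 {H : Type*} [NormedAddCommGroup H] [InnerProductSpace ℂ H] [CompleteSpace H]
    (L : H →ₗ[ℂ] H)
    (hsym : ∀ x y : H, (inner ℂ (L x) y : ℂ) = inner ℂ x (L y))
    (hpos : ∀ x : H, 0 ≤ (inner ℂ (L x) x : ℂ).re)
    (J : H →L[ℂ] H) (hJsa : ∀ x y : H, (inner ℂ (J x) y : ℂ) = inner ℂ x (J y))
    (hJ : ‖J‖ ≤ 1) (Ω : ℝ)
    (𝔏 : ℂ → H →ₗ[ℂ] H)
    (h𝔏 : ∀ (σ : ℂ) (ξ : H), 𝔏 σ ξ = -σ^2 • ξ + (2 * (Ω : ℂ) * σ) • J ξ + L ξ)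
    (S : Set ℂ)
    (hS : S = {z : ℂ | ¬ ∃ T : H →L[ℂ] H, (∀ f : H, 𝔏 z (T f) = f) ∧ ∀ ξ : H, T (𝔏 z ξ) = ξ})
    (hSne : S.Nonempty)
    (σ : ℂ) (T : H →L[ℂ] H)
    (hT1 : ∀ f : H, 𝔏 σ (T f) = f) (hT2 : ∀ ξ : H, T (𝔏 σ ξ) = ξ) :
    1 / (Metric.infDist σ S * (2 * (‖σ‖ + |Ω|) + Metric.infDist σ S)) ≤ ‖T‖ := by
  classical
  have hLsym : L.IsSymmetric := fun x y => hsym x y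
  have hLc : Continuous L := hLsym.continuous
  set Lc : H →L[ℂ] H := ⟨L, hLc⟩ with hLcdef
  set c : ℝ := 2 * (‖σ‖ + |Ω|) with hcdef
  set d : ℝ := Metric.infDist σ S with hddef
  have hc0 : 0 ≤ c := by positivity
  have hd0 : 0 ≤ d := Metric.infDist_nonneg
  set A : ℂ → H →L[ℂ] H := fun z => (-z^2) • (1 : H →L[ℂ] H) + (2*(Ω:ℂ)*z) • J + Lc with hAdef
  have hAapp : ∀ z ξ, A z ξ = 𝔏 z ξ := by
    intro z ξ
    simp [hAdef, h𝔏, hLcdef]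
  -- key lemma
  have key : ∀ μ ∈ S, 1 ≤ ‖T‖ * (dist σ μ * (c + dist σ μ)) := by
    intro μ hμ
    by_contra hlt
    push_neg at hlt
    have hAST : A σ * T = 1 := by
      ext f
      simpa [ContinuousLinearMap.mul_apply, hAapp] using hT1 f
    have hTAS : T * A σ = 1 := by
      ext ξ
      simpa [ContinuousLinearMap.mul_apply, hAapp] using hT2 ξ
    set r : ℝ := dist σ μ with hrdef
    have hr0 : 0 ≤ r := dist_nonneg
    set D : H →L[ℂ] H := A μ - A σ with hDdef
    have hD2 : D = (σ^2 - μ^2) • (1 : H →L[ℂ] H) + (2*(Ω:ℂ)*(μ-σ)) • J := by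
      ext ξ
      simp [hDdef, hAdef]
      module
    have hDnorm : ‖D‖ ≤ r * (c + r) := by
      have h1 : ‖(σ^2 - μ^2 : ℂ)‖ ≤ r * (2 * ‖σ‖ + r) := by
        have : (σ^2 - μ^2 : ℂ) = (σ - μ) * (σ + μ) := by ring
        rw [this, norm_mul]
        have h3 : ‖σ - μ‖ = r := by rw [hrdef, dist_eq_norm]
        have h4 : ‖(σ + μ : ℂ)‖ ≤ 2 * ‖σ‖ + r := by
          have : (σ + μ : ℂ) = 2 * σ - (σ - μ) := by ring
          rw [this]
          calc ‖(2 * σ - (σ - μ) : ℂ)‖ ≤ ‖(2*σ : ℂ)‖ + ‖(σ - μ : ℂ)‖ := norm_sub_le _ _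
            _ ≤ 2 * ‖σ‖ + r := by rw [h3]; simp [norm_mul]
        rw [h3]
        exact mul_le_mul_of_nonneg_left h4 hr0
      have h2 : ‖(2*(Ω:ℂ)*(μ-σ) : ℂ)‖ ≤ 2 * |Ω| * r := by
        rw [norm_mul, norm_mul]
        have : ‖(μ - σ : ℂ)‖ = r := by rw [hrdef, dist_eq_norm, norm_sub_rev]
        simp [this, Complex.norm_real, abs_of_nonneg]
      have hn1 : ‖(1 : H →L[ℂ] H)‖ ≤ 1 := ContinuousLinearMap.norm_id_le
      have e1 : ‖(σ^2 - μ^2 : ℂ)‖ * ‖(1 : H →L[ℂ] H)‖ ≤ r * (2 * ‖σ‖ + r) := by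
        calc ‖(σ^2 - μ^2 : ℂ)‖ * ‖(1 : H →L[ℂ] H)‖ ≤ (r * (2 * ‖σ‖ + r)) * 1 :=
              mul_le_mul h1 hn1 (norm_nonneg _) (by positivity)
          _ = r * (2 * ‖σ‖ + r) := mul_one _
      have e2 : ‖(2*(Ω:ℂ)*(μ-σ) : ℂ)‖ * ‖J‖ ≤ 2 * |Ω| * r := by
        calc ‖(2*(Ω:ℂ)*(μ-σ) : ℂ)‖ * ‖J‖ ≤ (2 * |Ω| * r) * 1 :=
              mul_le_mul h2 hJ (norm_nonneg _) (by positivity)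
          _ = 2 * |Ω| * r := mul_one _
      have hcsum : r * (c + r) = r * (2 * ‖σ‖ + r) + 2 * |Ω| * r := by rw [hcdef]; ring
      calc ‖D‖ ≤ ‖(σ^2 - μ^2 : ℂ)‖ * ‖(1 : H →L[ℂ] H)‖ + ‖(2*(Ω:ℂ)*(μ-σ) : ℂ)‖ * ‖J‖ := by
            rw [hD2]
            refine le_trans (norm_add_le _ _) ?_
            rw [norm_smul, norm_smul]
        _ ≤ r * (c + r) := by rw [hcsum]; exact add_le_add e1 e2
    have hTD : ‖-(T * D)‖ < 1 := by
      rw [norm_neg]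
      calc ‖T * D‖ ≤ ‖T‖ * ‖D‖ := norm_mul_le _ _
        _ ≤ ‖T‖ * (r * (c + r)) := by gcongr
        _ < 1 := hlt
    set u : (H →L[ℂ] H)ˣ := Units.oneSub _ hTD with hudef
    have huv : (u : H →L[ℂ] H) = 1 + T * D := by
      simp [hudef, Units.oneSub]
    have hAμ : A μ = A σ * u := by
      rw [huv, mul_add, mul_one, ← mul_assoc, hAST, one_mul, hDdef]
      abel
    have hexists : ∃ T' : H →L[ℂ] H, (∀ f : H, 𝔏 μ (T' f) = f) ∧ ∀ ξ : H, T' (𝔏 μ ξ) = ξ := by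
      refine ⟨(↑u⁻¹ : H →L[ℂ] H) * T, ?_, ?_⟩
      · intro f
        have h : A μ * ((↑u⁻¹ : H →L[ℂ] H) * T) = 1 := by
          rw [hAμ, mul_assoc, ← mul_assoc (u : H →L[ℂ] H), u.mul_inv, one_mul, hAST]
        have := congrFun (congrArg (fun (X : H →L[ℂ] H) => (X : H → H)) h) f
        simpa [ContinuousLinearMap.mul_apply, hAapp] using this
      · intro ξ
        have h : ((↑u⁻¹ : H →L[ℂ] H) * T) * A μ = 1 := by
          rw [hAμ, ← mul_assoc, mul_assoc _ T, hTAS, mul_one]; exact u.inv_mul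
        have := congrFun (congrArg (fun (X : H →L[ℂ] H) => (X : H → H)) h) ξ
        simpa [ContinuousLinearMap.mul_apply, hAapp] using this
    rw [hS] at hμ
    exact hμ hexists
  -- conclude
  by_contra hcon
  push_neg at hcon
  have hden : 0 < d * (c + d) := by
    rcases lt_or_ge 0 (d * (c + d)) with h | h
    · exact h
    · exfalso
      have : (1 : ℝ) / (d * (c + d)) ≤ 0 := div_nonpos_of_nonneg_of_nonpos zero_le_one h
      exact absurd (lt_of_le_of_lt this (lt_of_le_of_lt (norm_nonneg T) hcon)) (lt_irrefl _)
  have hK : ‖T‖ * (d * (c + d)) < 1 := (lt_div_iff₀ hden).mp hcon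
  obtain ⟨d', hdd', hd'⟩ : ∃ d', d < d' ∧ ‖T‖ * (d' * (c + d')) < 1 := by
    have hcont : ContinuousAt (fun t : ℝ => ‖T‖ * (t * (c + t))) d := by fun_prop
    have h1 : ∀ᶠ t in nhds d, ‖T‖ * (t * (c + t)) < 1 :=
      hcont.eventually_lt continuousAt_const hK
    have h2 : ∀ᶠ t in nhdsWithin d (Set.Ioi d), ‖T‖ * (t * (c + t)) < 1 :=
      h1.filter_mono nhdsWithin_le_nhds
    obtain ⟨t, ht1, ht2⟩ := (h2.and self_mem_nhdsWithin).exists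
    exact ⟨t, ht2, ht1⟩
  obtain ⟨μ, hμS, hμd⟩ := (Metric.infDist_lt_iff hSne).mp (by rw [← hddef]; exact hdd')
  have hkey := key μ hμS
  have hr0 : (0:ℝ) ≤ dist σ μ := dist_nonneg
  have hT0 : (0:ℝ) ≤ ‖T‖ := norm_nonneg _
  have hd'0 : 0 ≤ d' := le_trans hd0 (le_of_lt hdd')
  have hmono : ‖T‖ * (dist σ μ * (c + dist σ μ)) ≤ ‖T‖ * (d' * (c + d')) := by
    gcongr <;> exact le_of_lt hμd
  linarith [hkey, hd', hmono]
end

section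
/- Let (σₙ) be a sequence of complex numbers converging to σ∞, and suppose for each n there exist real numbers bₙ, cₙ with |bₙ| ≤ 2|Ω|, cₙ ≥ 0, such that -σₙ² + bₙσₙ + cₙ → 0 as n → ∞. Then σ∞ is real. -/
lemma quad_real_root (b c : ℝ) (hc : 0 ≤ c) (z : ℂ) (h : z ^ 2 = (b : ℂ) * z + (c : ℂ)) :
    z.im = 0 := by
  have him : 2 * z.re * z.im = b * z.im := by
    have := congrArg Complex.im h
    simp [pow_two, Complex.mul_im, Complex.add_im] at this
    linarith
  have hre : z.re * z.re - z.im * z.im = b * z.re + c := by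
    have := congrArg Complex.re h
    simp [pow_two, Complex.mul_re, Complex.add_re] at this
    linarith
  by_contra hy
  have hb2 : b = 2 * z.re := by
    have h0 : (2 * z.re - b) * z.im = 0 := by ring_nf; linarith [him]
    rcases mul_eq_zero.mp h0 with h1 | h1
    · linarith
    · exact absurd h1 hy
  rw [hb2] at hre
  linarith [mul_self_pos.mpr hy, mul_self_nonneg z.re]

theorem stmt_12 (Ω : ℝ) (σ : ℕ → ℂ) (σinf : ℂ) (b c : ℕ → ℝ)
    (hb : ∀ n, |b n| ≤ 2 * |Ω|) (hc : ∀ n, 0 ≤ c n)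
    (hσ : Filter.Tendsto σ Filter.atTop (nhds σinf))
    (h : Filter.Tendsto (fun n => -(σ n)^2 + (b n : ℂ) * σ n + (c n : ℂ))
      Filter.atTop (nhds 0)) :
    σinf.im = 0 := by
  have hmem : ∀ n, b n ∈ Set.Icc (-(2 * |Ω|)) (2 * |Ω|) := fun n => abs_le.mp (hb n)
  obtain ⟨binf, hbinfmem, φ, hφ, hbφ⟩ :=
    tendsto_subseq_of_bounded (Metric.isBounded_Icc (-(2 * |Ω|)) (2 * |Ω|)) hmem
  have hφat := hφ.tendsto_atTop
  have hσφ : Filter.Tendsto (σ ∘ φ) Filter.atTop (nhds σinf) := hσ.comp hφat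
  have hqφ := h.comp hφat
  have hbφC : Filter.Tendsto (fun n => ((b (φ n)) : ℂ)) Filter.atTop (nhds (binf : ℂ)) :=
    (Complex.continuous_ofReal.tendsto binf).comp hbφ
  set L : ℂ := σinf ^ 2 - (binf : ℂ) * σinf with hL
  have hcφ : Filter.Tendsto (fun n => ((c (φ n)) : ℂ)) Filter.atTop (nhds L) := by
    have h1 : Filter.Tendsto
        (fun n => (-(σ (φ n)) ^ 2 + (b (φ n) : ℂ) * σ (φ n) + (c (φ n) : ℂ))
          + (σ (φ n)) ^ 2 - (b (φ n) : ℂ) * σ (φ n)) Filter.atTop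
        (nhds (0 + σinf ^ 2 - (binf : ℂ) * σinf)) :=
      (hqφ.add (hσφ.pow 2)).sub (hbφC.mul hσφ)
    rw [zero_add] at h1
    convert h1 using 2 with n
    ring
  have himL : L.im = 0 := by
    have h2 : Filter.Tendsto (fun n => ((c (φ n) : ℂ)).im) Filter.atTop (nhds L.im) :=
      (Complex.continuous_im.tendsto L).comp hcφ
    have h3 : (fun n => ((c (φ n) : ℂ)).im) = fun _ => (0 : ℝ) := by
      funext n; simp
    rw [h3] at h2
    exact (tendsto_nhds_unique tendsto_const_nhds h2).symm
  have hreL : 0 ≤ L.re := by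
    have h2 : Filter.Tendsto (fun n => ((c (φ n) : ℂ)).re) Filter.atTop (nhds L.re) :=
      (Complex.continuous_re.tendsto L).comp hcφ
    exact ge_of_tendsto' h2 (fun n => by simpa using hc (φ n))
  have hLre : ((L.re : ℂ)) = L := by
    apply Complex.ext <;> simp [himL]
  have heq : σinf ^ 2 = (binf : ℂ) * σinf + (L.re : ℂ) := by
    rw [hLre, hL]; ring
  exact quad_real_root binf L.re hreL σinf heq
end
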